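/- Let G be a bipartite tree on node set D ⊔ N with |D| = k+1, |N| = k (k a positive integer) such that every node of N has degree 2. Then every edge of G is contained in a perfect matching of G − i on (D \ {i}) ⊔ N for some i ∈ D; consequently G is the union of the perfect matchings obtained by deleting the vertices of D one at a time. -/

import Mathlib

open SimpleGraph

-- parity of walks in a bipartite graph
lemma walk_parity {V : Type} [DecidableEq V] {G : SimpleGraph V} {D N : Finset V}
    (hdisj : Disjoint D N)
    (hbip : ∀ u v, G.Adj u v → (u ∈ D ∧ v ∈ N) ∨ (u ∈ N ∧ v ∈ D)) :
    ∀ {a b : V} (p : G.Walk a b), ((a ∈ N) ↔ (b ∈ N)) ↔ Even p.length := by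
  intro a b p
  induction p with
  | nil => simp
  | @cons a c b h q ih =>
    have hflip : (a ∈ N) ↔ ¬ (c ∈ N) := by
      rcases hbip a c h with ⟨ha, hc⟩ | ⟨ha, hc⟩
      · have := Finset.disjoint_left.mp hdisj ha
        tauto
      · have := Finset.disjoint_left.mp hdisj hc
        tauto
    simp only [SimpleGraph.Walk.length_cons, Nat.even_add_one, ← ih]
    tauto

-- unique parent in a tree
lemma unique_parent {V : Type} [DecidableEq V] {G : SimpleGraph V} (htree : G.IsTree) (i x : V) (hx : x ≠ i) :
    ∃! y, G.Adj x y ∧ G.dist i y + 1 = G.dist i x := by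
  have hconn := htree.isConnected
  have hpos : 0 < G.dist i x := hconn.pos_dist_of_ne (Ne.symm hx)
  -- existence
  obtain ⟨p, hp, hlen⟩ := hconn.exists_path_of_dist x i
  cases p with
  | nil => exact absurd rfl hx
  | @cons _ y _ h q =>
    have hqle : G.dist i y ≤ q.length := by
      have := G.dist_le q.reverse
      simpa using this
    have hlen' : q.length + 1 = G.dist x i := by simpa using hlen
    have hxi : G.dist x i = G.dist i x := G.dist_comm
    have htri : G.dist i x ≤ G.dist i y + 1 := by
      have h1 : G.dist y x = 1 := dist_eq_one_iff_adj.mpr h.symm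
      have := hconn.dist_triangle (u := i) (v := y) (w := x)
      omega
    have hy : G.Adj x y ∧ G.dist i y + 1 = G.dist i x := ⟨h, by omega⟩
    refine ⟨y, hy, ?_⟩
    -- uniqueness
    intro z hz
    by_contra hne
    -- build two distinct paths from x to i
    have build : ∀ w : V, G.Adj x w → G.dist i w + 1 = G.dist i x →
        ∃ r : G.Walk x i, r.IsPath ∧ r.getVert 1 = w := by
      intro w hw hd
      obtain ⟨s, hs, hslen⟩ := hconn.exists_path_of_dist i w
      have hxns : x ∉ s.support := by
        intro hmem
        have h1 : G.dist i x ≤ (s.takeUntil x hmem).length := G.dist_le _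
        have h2 : (s.takeUntil x hmem).length ≤ s.length := SimpleGraph.Walk.length_takeUntil_le _ _
        omega
      refine ⟨(SimpleGraph.Walk.cons hw s.reverse), ?_, ?_⟩
      · exact hs.reverse.cons (by simpa using hxns)
      · simp [SimpleGraph.Walk.getVert_cons_succ]
    obtain ⟨r1, hr1, hg1⟩ := build y hy.1 hy.2
    obtain ⟨r2, hr2, hg2⟩ := build z hz.1 hz.2
    obtain ⟨P, -, hP⟩ := htree.existsUnique_path x i
    have : r1 = r2 := (hP r1 hr1).trans (hP r2 hr2).symm
    rw [this, hg2] at hg1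
    exact hne hg1

theorem stmt_1 {V : Type} [Fintype V] [DecidableEq V]
    (G : SimpleGraph V) [DecidableRel G.Adj]
    (D N : Finset V) (k : ℕ) (hk : 0 < k)
    (hdisj : Disjoint D N) (hcover : D ∪ N = Finset.univ)
    (hD : D.card = k + 1) (hN : N.card = k)
    (htree : G.IsTree)
    (hbip : ∀ u v, G.Adj u v → (u ∈ D ∧ v ∈ N) ∨ (u ∈ N ∧ v ∈ D))
    (hdeg : ∀ v ∈ N, G.degree v = 2) :
    ∀ u v, G.Adj u v → ∃ i ∈ D, ∃ M : G.Subgraph,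
      M.verts = ↑(D.erase i ∪ N) ∧ M.IsMatching ∧ M.Adj u v := by
  have hconn := htree.isConnected
  -- basic facts
  have hND : ∀ {x y}, G.Adj x y → x ∈ N → y ∈ D := by
    intro x y h hx
    rcases hbip x y h with ⟨hx', -⟩ | ⟨-, hy⟩
    · exact absurd hx (Finset.disjoint_left.mp hdisj hx')
    · exact hy
  have hDN : ∀ {x y}, G.Adj x y → x ∈ D → y ∈ N := by
    intro x y h hx
    rcases hbip x y h with ⟨-, hy⟩ | ⟨hx', -⟩
    · exact hy
    · exact absurd hx' (Finset.disjoint_left.mp hdisj hx)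
  -- parity of distances
  have hparD : ∀ i ∈ D, ∀ a ∈ D, Even (G.dist i a) := by
    intro i hi a ha
    obtain ⟨p, hp⟩ := (hconn i a).exists_walk_length_eq_dist
    rw [← hp]
    rw [← walk_parity hdisj hbip p]
    constructor <;> intro h
    · exact absurd hi (Finset.disjoint_right.mp hdisj h)
    · exact absurd ha (Finset.disjoint_right.mp hdisj h)
  have hparN : ∀ i ∈ D, ∀ a ∈ N, ¬ Even (G.dist i a) := by
    intro i hi a ha
    obtain ⟨p, hp⟩ := (hconn i a).exists_walk_length_eq_dist
    rw [← hp, ← walk_parity hdisj hbip p]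
    intro h
    exact absurd hi (Finset.disjoint_right.mp hdisj (h.mpr ha))
  -- the main claim for edges oriented D → N
  have main : ∀ a b, G.Adj a b → a ∈ D → b ∈ N → ∃ i ∈ D, ∃ M : G.Subgraph,
      M.verts = ↑(D.erase i ∪ N) ∧ M.IsMatching ∧ M.Adj a b := by
    intro a b hab ha hb
    -- find the other neighbor i of b
    have hcard : 1 < (G.neighborFinset b).card := by
      rw [card_neighborFinset_eq_degree, hdeg b hb]; omega
    obtain ⟨i, hiN, hia⟩ := Finset.exists_mem_ne hcard a
    have hbi : G.Adj b i := (mem_neighborFinset _ _ _).mp hiN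
    have hiD : i ∈ D := hND hbi hb
    -- distances
    have hdib : G.dist i b = 1 := dist_eq_one_iff_adj.mpr hbi.symm
    have hdia : G.dist i a = 2 := by
      have h1 : G.dist b a = 1 := dist_eq_one_iff_adj.mpr hab.symm
      have h2 : G.dist i a ≤ G.dist i b + G.dist b a := hconn.dist_triangle
      have h3 : G.dist i a ≠ 0 := fun h => hia (hconn.dist_eq_zero_iff.mp h)
      have h4 : G.dist i a ≠ 1 := by
        intro h
        have := dist_eq_one_iff_adj.mp h
        exact absurd (hDN this hiD) (Finset.disjoint_left.mp hdisj ha)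
      omega
    -- neighbors have distance differing by exactly one
    have hadjdist : ∀ {x y}, G.Adj x y →
        (G.dist i y = G.dist i x + 1 ∨ G.dist i y + 1 = G.dist i x) := by
      intro x y h
      have h1 : G.dist x y = 1 := dist_eq_one_iff_adj.mpr h
      have h2 : G.dist y x = 1 := dist_eq_one_iff_adj.mpr h.symm
      have t1 : G.dist i y ≤ G.dist i x + G.dist x y := hconn.dist_triangle
      have t2 : G.dist i x ≤ G.dist i y + G.dist y x := hconn.dist_triangle
      have hne : G.dist i y ≠ G.dist i x := by
        rcases hbip x y h with ⟨hx, hy⟩ | ⟨hx, hy⟩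
        · intro hEq
          exact hparN i hiD y hy (hEq ▸ hparD i hiD x hx)
        · intro hEq
          exact hparN i hiD x hx (hEq ▸ hparD i hiD y hy)
      omega
    refine ⟨i, hiD, ⟨↑(D.erase i ∪ N),
      fun x y => G.Adj x y ∧ ((x ∈ N ∧ G.dist i y = G.dist i x + 1) ∨
        (y ∈ N ∧ G.dist i x = G.dist i y + 1)), fun h => h.1, ?_, ?_⟩, rfl, ?_, ?_⟩
    · -- edge_vert
      intro x y ⟨h, hc⟩
      simp only [Finset.coe_union, Set.mem_union, Finset.mem_coe, Finset.coe_erase,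
        Set.mem_diff, Set.mem_singleton_iff]
      rcases hc with ⟨hx, -⟩ | ⟨hy, hd⟩
      · exact Or.inr hx
      · refine Or.inl ⟨hND h.symm hy, ?_⟩
        intro hxi
        subst hxi
        simp [SimpleGraph.dist_self] at hd
    · -- symm
      constructor
      intro x y ⟨h, hc⟩
      exact ⟨h.symm, hc.symm⟩
    · -- IsMatching
      intro x hx
      simp only [Finset.coe_union, Set.mem_union, Finset.mem_coe, Finset.mem_erase] at hx
      rcases hx with ⟨hxi, hxD⟩ | hxN
    -- case x ∈ D \ {i}
      · obtain ⟨y₀, ⟨hy₀a, hy₀d⟩, hy₀u⟩ := unique_parent htree i x hxi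
        have hy₀N : y₀ ∈ N := hDN hy₀a hxD
        refine ⟨y₀, ⟨hy₀a, Or.inr ⟨hy₀N, hy₀d.symm⟩⟩, ?_⟩
        rintro z ⟨hz, ⟨hxN, -⟩ | ⟨hzN, hzd⟩⟩
        · exact absurd hxN (Finset.disjoint_left.mp hdisj hxD)
        · exact hy₀u z ⟨hz, hzd.symm⟩
    -- case x ∈ N
      · have hxi : x ≠ i := fun h => Finset.disjoint_right.mp hdisj hxN (h ▸ hiD)
        obtain ⟨y₀, ⟨hy₀a, hy₀d⟩, hy₀u⟩ := unique_parent htree i x hxi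
        have hcard2 : (G.neighborFinset x).card = 2 := by
          rw [card_neighborFinset_eq_degree, hdeg x hxN]
        have hy₀m : y₀ ∈ G.neighborFinset x := (mem_neighborFinset _ _ _).mpr hy₀a
        obtain ⟨c, hcm, hcy₀⟩ := Finset.exists_mem_ne (by rw [hcard2]; omega) y₀
        have hca : G.Adj x c := (mem_neighborFinset _ _ _).mp hcm
        have hcd : G.dist i c = G.dist i x + 1 := by
          rcases hadjdist hca with h | h
          · exact h
          · exact absurd (hy₀u c ⟨hca, h⟩) hcy₀
        refine ⟨c, ⟨hca, Or.inl ⟨hxN, hcd⟩⟩, ?_⟩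
        rintro z ⟨hz, ⟨-, hzd⟩ | ⟨hzN, -⟩⟩
        · -- z is a neighbor with dist i z = dist i x + 1; show z = c
          have hzm : z ∈ G.neighborFinset x := (mem_neighborFinset _ _ _).mpr hz
          have hsub : ({y₀, c} : Finset V) ⊆ G.neighborFinset x := by
            intro w hw
            rcases Finset.mem_insert.mp hw with h | h
            · exact h ▸ hy₀m
            · exact (Finset.mem_singleton.mp h) ▸ hcm
          have hpair : ({y₀, c} : Finset V).card = 2 := by
            rw [Finset.card_insert_of_notMem (by simpa using (Ne.symm hcy₀)),
              Finset.card_singleton]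
          have heq : G.neighborFinset x = {y₀, c} :=
            (Finset.eq_of_subset_of_card_le hsub (by omega)).symm
          rw [heq] at hzm
          rcases Finset.mem_insert.mp hzm with h | h
          · subst h; omega
          · exact Finset.mem_singleton.mp h
        · exact absurd hzN (Finset.disjoint_left.mp hdisj (hND hz hxN))
    · -- M.Adj a b
      exact ⟨hab, Or.inr ⟨hb, by omega⟩⟩
  intro u v huv
  rcases hbip u v huv with ⟨hu, hv⟩ | ⟨hu, hv⟩
  · exact main u v huv hu hv
  · obtain ⟨i, hi, M, h1, h2, h3⟩ := main v u huv.symm hv hu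
    exact ⟨i, hi, M, h1, h2, h3.symm⟩
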